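/- Let k ≥ 2, c ≥ 0, and define levelC_k(i) = min(c, largest x with k^x ∣ i) for positive i. Then for every n ≥ 1, the sum over i from 1 to n of k^(levelC_k(i) + 1) is at most n · k · (c + 1). -/

import Mathlib

private lemma telescope (k t : ℕ) (hk : 2 ≤ k) :
    k + ∑ j ∈ Finset.Icc 1 t, (k ^ (j + 1) - k ^ j) = k ^ (t + 1) := by
  induction t with
  | zero => simp
  | succ t ih =>
    rw [Finset.sum_Icc_succ_top (by omega), ← Nat.add_assoc, ih]
    have h : k ^ (t + 1) ≤ k ^ (t + 1 + 1) :=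
      Nat.pow_le_pow_right (by omega) (by omega)
    omega

private lemma dvd_iff_le (k i j : ℕ) (hk : 2 ≤ k) (hi : 1 ≤ i) :
    k ^ j ∣ i ↔ j ≤ Nat.maxPowDiv k i := by
  constructor
  · exact fun h => (Nat.pow_dvd_iff_le_padicValNat (p := k) (n := i) (by omega) (by omega)).mp h
  · intro h
    exact dvd_trans (pow_dvd_pow k h) (Nat.maxPowDiv.pow_dvd (p := k) (n := i))

theorem stmt12 (k c n : ℕ) (hk : 2 ≤ k) (hn : 1 ≤ n) :
    ∑ i ∈ Finset.Icc 1 n, k ^ (min c (Nat.maxPowDiv k i) + 1) ≤ n * k * (c + 1) := by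
  -- pointwise rewrite
  have step : ∀ i ∈ Finset.Icc 1 n,
      k ^ (min c (Nat.maxPowDiv k i) + 1)
        = k + ∑ j ∈ Finset.Icc 1 c, (if k ^ j ∣ i then k ^ (j + 1) - k ^ j else 0) := by
    intro i hi
    have hi1 : 1 ≤ i := (Finset.mem_Icc.mp hi).1
    set t := min c (Nat.maxPowDiv k i) with ht
    have hsum : ∑ j ∈ Finset.Icc 1 c, (if k ^ j ∣ i then k ^ (j + 1) - k ^ j else 0)
        = ∑ j ∈ Finset.Icc 1 t, (k ^ (j + 1) - k ^ j) := by
      rw [← Finset.sum_filter]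
      apply Finset.sum_congr _ (fun _ _ => rfl)
      ext j
      simp only [Finset.mem_filter, Finset.mem_Icc]
      constructor
      · rintro ⟨⟨h1, hc⟩, hd⟩
        exact ⟨h1, le_min hc ((dvd_iff_le k i j hk hi1).mp hd)⟩
      · rintro ⟨h1, hlt⟩
        exact ⟨⟨h1, hlt.trans (min_le_left _ _)⟩,
          (dvd_iff_le k i j hk hi1).mpr (hlt.trans (min_le_right _ _))⟩
    rw [hsum, telescope k t hk]
  rw [Finset.sum_congr rfl step, Finset.sum_add_distrib, Finset.sum_const,
    Nat.card_Icc, Finset.sum_comm]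
  simp only [Nat.add_sub_cancel, smul_eq_mul]
  have hcount : ∀ j, ∑ i ∈ Finset.Icc 1 n, (if k ^ j ∣ i then k ^ (j + 1) - k ^ j else 0)
      = (n / k ^ j) * (k ^ (j + 1) - k ^ j) := by
    intro j
    rw [← Finset.sum_filter]
    simp only [Finset.sum_const, smul_eq_mul]
    congr 1
    have : Finset.Icc 1 n = Finset.Ioc 0 n := rfl
    rw [this, ← Nat.Ioc_filter_dvd_card_eq_div n (k ^ j)]
  have hbound : ∀ j, (n / k ^ j) * (k ^ (j + 1) - k ^ j) ≤ n * k := by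
    intro j
    have h1 : k ^ (j + 1) - k ^ j ≤ k ^ j * k := by
      rw [pow_succ]; omega
    calc (n / k ^ j) * (k ^ (j + 1) - k ^ j) ≤ (n / k ^ j) * (k ^ j * k) :=
          Nat.mul_le_mul_left _ h1
      _ = (n / k ^ j * k ^ j) * k := by ring
      _ ≤ n * k := Nat.mul_le_mul_right _ (Nat.div_mul_le_self n _)
  calc n * k + ∑ j ∈ Finset.Icc 1 c, ∑ i ∈ Finset.Icc 1 n,
        (if k ^ j ∣ i then k ^ (j + 1) - k ^ j else 0)
      ≤ n * k + ∑ j ∈ Finset.Icc 1 c, n * k := by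
        gcongr with j hj
        rw [hcount j]; exact hbound j
    _ = n * k * (c + 1) := by
        rw [Finset.sum_const, Nat.card_Icc, smul_eq_mul, Nat.add_sub_cancel]
        ring
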